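/- Fix 0 < σ < 1 and an integer k ≥ 1. Then the minimum over real polynomials p of degree at most k with p(1) = 1 of max_{x ∈ [0,σ]} |p(x)| equals 2ζ^k/(1+ζ^{2k}), where ζ = (1 − √(1−σ))/(1 + √(1−σ)); the minimum is attained by the rescaled Chebyshev polynomial T(x) = C_k(t(x))/C_k(t(1)) with t(x) = (2x − σ)/σ, where C_k is the degree-k Chebyshev polynomial of the first kind. -/

import Mathlib

open Polynomial

private lemma chebAux_eval_half (z : ℝ) (hz : z ≠ 0) :
    ∀ n : ℕ, (Polynomial.Chebyshev.T ℝ (n : ℤ)).eval ((z + z⁻¹)/2) = (z^n + z⁻¹^n)/2 := by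
  have key : ∀ n : ℕ,
      (Polynomial.Chebyshev.T ℝ (n : ℤ)).eval ((z + z⁻¹)/2) = (z^n + z⁻¹^n)/2 ∧
      (Polynomial.Chebyshev.T ℝ ((n+1 : ℕ) : ℤ)).eval ((z + z⁻¹)/2) = (z^(n+1) + z⁻¹^(n+1))/2 := by
    intro n
    induction n with
    | zero =>
      constructor
      · simp [Polynomial.Chebyshev.T_zero]
      · simp [Polynomial.Chebyshev.T_one]
    | succ n ih =>
      refine ⟨ih.2, ?_⟩
      have hcast : ((n+1+1 : ℕ) : ℤ) = (n : ℤ) + 2 := by push_cast; ring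
      rw [hcast, Polynomial.Chebyshev.T_add_two]
      have h1 : ((n : ℤ) + 1) = ((n+1 : ℕ) : ℤ) := by push_cast; ring
      simp only [eval_sub, eval_mul, eval_ofNat, eval_X, h1, ih.1, ih.2]
      field_simp
      linear_combination (z⁻¹ ^ n * (z - z⁻¹)) * mul_inv_cancel₀ hz
  exact fun n => (key n).1

private lemma chebAux_natDegree_le : ∀ n : ℕ, (Polynomial.Chebyshev.T ℝ (n : ℤ)).natDegree ≤ n := by
  have key : ∀ n : ℕ, (Polynomial.Chebyshev.T ℝ (n : ℤ)).natDegree ≤ n ∧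
      (Polynomial.Chebyshev.T ℝ ((n+1 : ℕ) : ℤ)).natDegree ≤ n+1 := by
    intro n
    induction n with
    | zero =>
      constructor
      · simp [Polynomial.Chebyshev.T_zero]
      · simpa [Polynomial.Chebyshev.T_one] using Polynomial.natDegree_X_le
    | succ n ih =>
      refine ⟨ih.2, ?_⟩
      have hcast : ((n+1+1 : ℕ) : ℤ) = (n : ℤ) + 2 := by push_cast; ring
      rw [hcast, Polynomial.Chebyshev.T_add_two]
      refine le_trans (natDegree_sub_le _ _) (max_le ?_ (le_trans ih.1 (by omega)))
      refine le_trans natDegree_mul_le ?_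
      have h1 : ((n : ℤ) + 1) = ((n+1 : ℕ) : ℤ) := by push_cast; ring
      rw [h1]
      have h2 : ((2 : ℝ[X]) * X).natDegree ≤ 1 :=
        le_trans natDegree_mul_le (by simp [Polynomial.natDegree_X])
      have h3 := ih.2
      omega
  exact fun n => (key n).1

private lemma chebAux_abs_le (n : ℕ) {y : ℝ} (hy : y ∈ Set.Icc (-1 : ℝ) 1) :
    |(Polynomial.Chebyshev.T ℝ (n : ℤ)).eval y| ≤ 1 := by
  have h : y = Real.cos (Real.arccos y) := (Real.cos_arccos hy.1 hy.2).symm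
  rw [h, Polynomial.Chebyshev.T_real_cos]
  exact Real.abs_cos_le_one _

set_option maxHeartbeats 1000000 in
/-- The constrained Chebyshev minimax problem on `[0, σ]`: the minimum of
`max_{x ∈ [0,σ]} |p(x)|` over polynomials of degree at most `k` with `p(1) = 1` equals
`2ζᵏ/(1+ζ^{2k})`, attained by the rescaled Chebyshev polynomial. -/
theorem chebyshev_minimax (σ : ℝ) (hσ0 : 0 < σ) (hσ1 : σ < 1) (k : ℕ) (hk : 1 ≤ k)
    (ζ : ℝ) (hζ : ζ = (1 - Real.sqrt (1 - σ)) / (1 + Real.sqrt (1 - σ)))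
    (T : Polynomial ℝ)
    (hT : T = Polynomial.C (((Polynomial.Chebyshev.T ℝ (k : ℤ)).eval ((2 - σ) / σ))⁻¹) *
      ((Polynomial.Chebyshev.T ℝ (k : ℤ)).comp (Polynomial.C (2 / σ) * Polynomial.X - 1))) :
    IsLeast {y : ℝ | ∃ p : Polynomial ℝ, p.natDegree ≤ k ∧ p.eval 1 = 1 ∧
        y = sSup ((fun x => |p.eval x|) '' Set.Icc 0 σ)}
      (2 * ζ ^ k / (1 + ζ ^ (2 * k))) ∧
    T.natDegree ≤ k ∧ T.eval 1 = 1 ∧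
    sSup ((fun x => |T.eval x|) '' Set.Icc 0 σ) = 2 * ζ ^ k / (1 + ζ ^ (2 * k)) := by
  set s := Real.sqrt (1 - σ) with hs
  have hs0 : 0 < s := Real.sqrt_pos.2 (by linarith)
  have hs2 : s^2 = 1 - σ := Real.sq_sqrt (by linarith)
  have hs1 : s < 1 := by nlinarith
  have hζ0 : 0 < ζ := by rw [hζ]; exact div_pos (by linarith) (by linarith)
  have hζ1 : ζ < 1 := by rw [hζ, div_lt_one (by linarith)]; linarith
  set M : ℝ := (Polynomial.Chebyshev.T ℝ (k : ℤ)).eval ((2 - σ) / σ) with hMdef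
  have hc : (ζ⁻¹ + (ζ⁻¹)⁻¹)/2 = (2 - σ)/σ := by
    rw [inv_inv, hζ, inv_div]
    have h1 : (1:ℝ) - s ≠ 0 := by linarith
    have h2 : (1:ℝ) + s ≠ 0 := by linarith
    field_simp
    nlinarith [hs2]
  have hM : M = (1 + ζ^(2*k))/(2*ζ^k) := by
    rw [hMdef, ← hc, chebAux_eval_half ζ⁻¹ (inv_ne_zero hζ0.ne') k, inv_inv]
    have hζk : ζ^k ≠ 0 := pow_ne_zero _ hζ0.ne'
    rw [inv_pow]
    field_simp
    rw [pow_mul]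
    ring
  have hMpos : 0 < M := by rw [hM]; positivity
  have hv : 2 * ζ ^ k / (1 + ζ ^ (2*k)) = M⁻¹ := by rw [hM, inv_div]
  have hTeval : ∀ x : ℝ,
      T.eval x = M⁻¹ * (Polynomial.Chebyshev.T ℝ (k : ℤ)).eval (2/σ * x - 1) := by
    intro x
    rw [hT]
    simp [eval_comp]
  have hcheb1 : (Polynomial.Chebyshev.T ℝ (k : ℤ)).eval (1 : ℝ) = 1 := by
    have := Polynomial.Chebyshev.T_real_cos 0 k
    simpa using this
  have htσ : 2/σ * σ - 1 = 1 := by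
    rw [div_mul_cancel₀ 2 hσ0.ne']; norm_num
  have ht1 : 2/σ * 1 - 1 = (2 - σ)/σ := by field_simp
  have hT1 : T.eval 1 = 1 := by
    rw [hTeval, ht1, ← hMdef, inv_mul_cancel₀ hMpos.ne']
  have hTdeg : T.natDegree ≤ k := by
    rw [hT]
    refine le_trans (natDegree_C_mul_le _ _) (le_trans natDegree_comp_le ?_)
    have h1 : (Polynomial.C (2/σ) * Polynomial.X - 1 : ℝ[X]).natDegree ≤ 1 := by
      refine le_trans (natDegree_sub_le _ _) (max_le ?_ (by simp))
      exact le_trans natDegree_mul_le (by simp [Polynomial.natDegree_X])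
    calc (Polynomial.Chebyshev.T ℝ (k : ℤ)).natDegree *
          (Polynomial.C (2/σ) * Polynomial.X - 1 : ℝ[X]).natDegree
        ≤ k * 1 := Nat.mul_le_mul (chebAux_natDegree_le k) h1
      _ = k := by omega
  have hmap : ∀ x ∈ Set.Icc (0:ℝ) σ, 2/σ * x - 1 ∈ Set.Icc (-1:ℝ) 1 := by
    intro x hx
    have h1 : 0 ≤ 2/σ * x := mul_nonneg (by positivity) hx.1
    have h2 : 2/σ * x ≤ 2 := by
      rw [div_mul_eq_mul_div, div_le_iff₀ hσ0]
      nlinarith [hx.2]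
    exact ⟨by linarith, by linarith⟩
  have himg : IsGreatest ((fun x => |T.eval x|) '' Set.Icc 0 σ) M⁻¹ := by
    constructor
    · refine ⟨σ, ⟨le_of_lt hσ0, le_refl σ⟩, ?_⟩
      show |T.eval σ| = M⁻¹
      rw [hTeval, htσ, hcheb1, mul_one, abs_of_pos (inv_pos.2 hMpos)]
    · rintro y ⟨x, hx, rfl⟩
      show |T.eval x| ≤ M⁻¹
      rw [hTeval, abs_mul, abs_of_pos (inv_pos.2 hMpos)]
      calc M⁻¹ * |(Polynomial.Chebyshev.T ℝ (k:ℤ)).eval (2/σ * x - 1)|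
          ≤ M⁻¹ * 1 :=
            mul_le_mul_of_nonneg_left (chebAux_abs_le k (hmap x hx)) (inv_pos.2 hMpos).le
        _ = M⁻¹ := mul_one _
  have hsup : sSup ((fun x => |T.eval x|) '' Set.Icc 0 σ) = M⁻¹ := himg.csSup_eq
  have key : ∀ p : ℝ[X], p.natDegree ≤ k → p.eval 1 = 1 →
      M⁻¹ ≤ sSup ((fun x => |p.eval x|) '' Set.Icc 0 σ) := by
    intro p hdeg hp1
    by_contra hlt
    push_neg at hlt
    set S := sSup ((fun x => |p.eval x|) '' Set.Icc 0 σ) with hS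
    have hcont : Continuous fun x : ℝ => |p.eval x| := p.continuous.abs
    have hbdd : BddAbove ((fun x => |p.eval x|) '' Set.Icc 0 σ) :=
      (isCompact_Icc.image hcont).bddAbove
    have hup : ∀ x ∈ Set.Icc (0:ℝ) σ, |p.eval x| ≤ S := fun x hx => le_csSup hbdd ⟨x, hx, rfl⟩
    have hkpos : (0:ℝ) < k := by exact_mod_cast hk
    set XX : ℕ → ℝ := fun j => σ * (1 + Real.cos (j * Real.pi / k)) / 2 with hXX
    have hXmem : ∀ j : ℕ, XX j ∈ Set.Icc (0:ℝ) σ := by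
      intro j
      have h1 := Real.neg_one_le_cos (j * Real.pi / k)
      have h2 := Real.cos_le_one (j * Real.pi / k)
      constructor
      · simp only [hXX]
        nlinarith [mul_nonneg hσ0.le (by linarith : (0:ℝ) ≤ 1 + Real.cos (j * Real.pi / k))]
      · simp only [hXX]
        nlinarith [mul_nonneg hσ0.le (by linarith : (0:ℝ) ≤ 1 - Real.cos (j * Real.pi / k))]
    have hcosj : ∀ j : ℕ, Real.cos ((j:ℝ) * Real.pi) = (-1:ℝ)^j := by
      intro j
      simpa using Real.cos_nat_mul_pi_sub 0 j
    have hXT : ∀ j : ℕ, T.eval (XX j) = M⁻¹ * (-1)^j := by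
      intro j
      rw [hTeval]
      have harg : 2/σ * XX j - 1 = Real.cos (j * Real.pi / k) := by
        simp only [hXX]; field_simp [hσ0.ne']; ring
      rw [harg]
      have h2 : (Polynomial.Chebyshev.T ℝ (k:ℤ)).eval (Real.cos (j * Real.pi / k))
          = Real.cos ((k:ℝ) * ((j:ℝ) * Real.pi / k)) := by
        have := Polynomial.Chebyshev.T_real_cos ((j:ℝ) * Real.pi / k) k
        simpa using this
      rw [h2]
      have h3 : (k:ℝ) * ((j:ℝ) * Real.pi / k) = (j:ℝ) * Real.pi := by field_simp [hkpos.ne']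
      rw [h3, hcosj]
    have hXdec : ∀ i j : ℕ, i < j → j ≤ k → XX j < XX i := by
      intro i j hij hjk
      have hπ := Real.pi_pos
      have hij' : (i:ℝ) < (j:ℝ) := by exact_mod_cast hij
      have hjk' : (j:ℝ) ≤ (k:ℝ) := by exact_mod_cast hjk
      have h1 : (i:ℝ) * Real.pi / k < (j:ℝ) * Real.pi / k := by gcongr
      have h2 : 0 ≤ (i:ℝ) * Real.pi / k := by positivity
      have h3 : (j:ℝ) * Real.pi / k ≤ Real.pi := by
        rw [div_le_iff₀ hkpos]
        nlinarith
      have h4 := Real.cos_lt_cos_of_nonneg_of_le_pi h2 h3 h1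
      have h5 : 0 < σ * (Real.cos ((i:ℝ) * Real.pi / k) - Real.cos ((j:ℝ) * Real.pi / k)) :=
        mul_pos hσ0 (by linarith)
      simp only [hXX]
      linarith
    have hXmono : ∀ a b : ℕ, a ≤ b → b ≤ k → XX b ≤ XX a := by
      intro a b hab hbk
      rcases eq_or_lt_of_le hab with h | h
      · subst h; exact le_refl _
      · exact (hXdec a b h hbk).le
    have hX0 : XX 0 = σ := by
      simp only [hXX, Nat.cast_zero, zero_mul, zero_div, Real.cos_zero]
      ring
    set q := T - p with hq
    have hq1 : q.eval 1 = 0 := by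
      rw [hq]; simp [hT1, hp1]
    have hqdeg : q.natDegree ≤ k := le_trans (natDegree_sub_le T p) (max_le hTdeg hdeg)
    have hqalt : ∀ j : ℕ, 0 < (-1:ℝ)^j * q.eval (XX j) := by
      intro j
      have h2 : q.eval (XX j) = M⁻¹ * (-1)^j - p.eval (XX j) := by
        rw [hq]; simp [hXT j]
      have habs : |p.eval (XX j)| < M⁻¹ := lt_of_le_of_lt (hup _ (hXmem j)) hlt
      have hsq : (-1:ℝ)^j * (-1)^j = 1 := by rw [← mul_pow]; norm_num
      have h3 : (-1:ℝ)^j * p.eval (XX j) ≤ |p.eval (XX j)| := by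
        calc (-1:ℝ)^j * p.eval (XX j) ≤ |(-1:ℝ)^j * p.eval (XX j)| := le_abs_self _
          _ = |p.eval (XX j)| := by rw [abs_mul, abs_pow, abs_neg, abs_one, one_pow, one_mul]
      have h4 : (-1:ℝ)^j * q.eval (XX j) = M⁻¹ - (-1:ℝ)^j * p.eval (XX j) := by
        rw [h2]; linear_combination M⁻¹ * hsq
      linarith
    have hroot : ∀ j : Fin k, ∃ r, r ∈ Set.Ioo (XX ((j:ℕ)+1)) (XX (j:ℕ)) ∧ q.eval r = 0 := by
      intro j
      have hj : (j:ℕ) < k := j.2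
      have hltX : XX ((j:ℕ)+1) < XX (j:ℕ) := hXdec _ _ (Nat.lt_succ_self _) hj
      have ha := hqalt (j:ℕ)
      have hb := hqalt ((j:ℕ)+1)
      have hqc : Continuous fun x : ℝ => q.eval x := q.continuous
      rcases Nat.even_or_odd (j:ℕ) with he | ho
      · have e1 : (-1:ℝ)^(j:ℕ) = 1 := he.neg_one_pow
        have e2 : (-1:ℝ)^((j:ℕ)+1) = -1 := by rw [pow_succ, e1]; ring
        rw [e1, one_mul] at ha
        rw [e2] at hb
        have h0 : (0:ℝ) ∈ Set.Ioo (q.eval (XX ((j:ℕ)+1))) (q.eval (XX (j:ℕ))) :=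
          ⟨by linarith, ha⟩
        obtain ⟨r, hr, hr0⟩ := intermediate_value_Ioo hltX.le hqc.continuousOn h0
        exact ⟨r, hr, hr0⟩
      · have e1 : (-1:ℝ)^(j:ℕ) = -1 := ho.neg_one_pow
        have e2 : (-1:ℝ)^((j:ℕ)+1) = 1 := by rw [pow_succ, e1]; ring
        rw [e1] at ha
        rw [e2, one_mul] at hb
        have h0 : (0:ℝ) ∈ Set.Ioo (q.eval (XX (j:ℕ))) (q.eval (XX ((j:ℕ)+1))) :=
          ⟨by linarith, hb⟩
        obtain ⟨r, hr, hr0⟩ := intermediate_value_Ioo' hltX.le hqc.continuousOn h0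
        exact ⟨r, hr, hr0⟩
    choose r hrmem hrzero using hroot
    have hrltσ : ∀ j : Fin k, r j < σ := by
      intro j
      have h1 : r j < XX (j:ℕ) := (hrmem j).2
      have h2 : XX (j:ℕ) ≤ XX 0 := hXmono 0 (j:ℕ) (Nat.zero_le _) j.2.le
      rw [hX0] at h2
      linarith
    have hanti : ∀ i j : Fin k, i < j → r j < r i := by
      intro i j hij
      have h1 : r j < XX (j:ℕ) := (hrmem j).2
      have h2 : XX (j:ℕ) ≤ XX ((i:ℕ)+1) := hXmono _ _ (by omega) j.2.le
      have h3 : XX ((i:ℕ)+1) < r i := (hrmem i).1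
      linarith
    have hrinj : Function.Injective r := by
      intro a b hab
      by_contra hne
      rcases lt_or_gt_of_ne hne with h | h
      · exact absurd hab (ne_of_gt (hanti a b h))
      · exact absurd hab (ne_of_lt (hanti b a h))
    have hq0 : q ≠ 0 := by
      intro h0
      have h0' : T - p = 0 := by rw [← hq]; exact h0
      have hpT : T = p := sub_eq_zero.mp h0'
      have : S = M⁻¹ := by rw [hS, ← hpT, hsup]
      linarith
    set f : Option (Fin k) → ℝ := fun o => o.elim 1 r with hf
    have hfinj : Function.Injective f := by
      intro a b hab
      match a, b with
      | none, none => rfl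
      | none, some j =>
        exfalso
        have : (1:ℝ) = r j := hab
        have := hrltσ j
        linarith
      | some j, none =>
        exfalso
        have : r j = (1:ℝ) := hab
        have := hrltσ j
        linarith
      | some i, some j =>
        have : r i = r j := hab
        rw [hrinj this]
    have hfeval : ∀ o : Option (Fin k), q.eval (f o) = 0 := by
      intro o
      match o with
      | none => exact hq1
      | some j => exact hrzero j
    have hcard : q.natDegree < Fintype.card (Option (Fin k)) := by
      rw [Fintype.card_option, Fintype.card_fin]
      omega
    exact hq0 (Polynomial.eq_zero_of_natDegree_lt_card_of_eval_eq_zero q hfinj hfeval hcard)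
  refine ⟨⟨⟨T, hTdeg, hT1, hv.trans hsup.symm⟩, ?_⟩, hTdeg, hT1, hsup.trans hv.symm⟩
  rintro y ⟨p, hd, hp1, rfl⟩
  rw [hv]
  exact key p hd hp1
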